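/- Let X and Y be metric spaces with finite supports. If S ⊆ X × Y is a correspondence (every x ∈ X appears as a first coordinate of some element of S and every y ∈ Y appears as a second coordinate) and the distortion of S is strictly less than the separation of X, then there exists an injection f : X → Y whose graph is contained in S. -/
import Mathlib

/-- The distortion of a relation `S ⊆ X × Y` between metric spaces. -/
noncomputable def relDis {X Y : Type*} [MetricSpace X] [MetricSpace Y] (S : Set (X × Y)) : ℝ :=
  sSup {v | ∃ p ∈ S, ∃ q ∈ S, v = |dist p.1 q.1 - dist p.2 q.2|}

/-- The separation of a metric space: the infimum of distances between distinct points. -/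
noncomputable def sep (X : Type*) [MetricSpace X] : ℝ :=
  sInf {v | ∃ x y : X, x ≠ y ∧ v = dist x y}

/-- `S` is a correspondence between `X` and `Y`. -/
def IsCorrespondence {X Y : Type*} (S : Set (X × Y)) : Prop :=
  (∀ x : X, ∃ y : Y, (x, y) ∈ S) ∧ ∀ y : Y, ∃ x : X, (x, y) ∈ S

theorem stmt1 {X Y : Type*} [MetricSpace X] [MetricSpace Y]
    [Fintype X] [Fintype Y] [Nonempty X] [Nonempty Y]
    (S : Set (X × Y)) (hS : IsCorrespondence S)
    (hdis : relDis S < sep X) :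
    ∃ f : X → Y, Function.Injective f ∧ ∀ x : X, (x, f x) ∈ S := by
  choose f hf using hS.1
  refine ⟨f, ?_, hf⟩
  intro a b hab
  by_contra hne
  have h1 : sep X ≤ dist a b :=
    csInf_le ⟨0, by rintro v ⟨x, y, _, rfl⟩; positivity⟩ ⟨a, b, hne, rfl⟩
  have hSfin : S.Finite := Set.toFinite S
  have hfin : {v | ∃ p ∈ S, ∃ q ∈ S, v = |dist p.1 q.1 - dist p.2 q.2|}.Finite := by
    have : {v | ∃ p ∈ S, ∃ q ∈ S, v = |dist p.1 q.1 - dist p.2 q.2|} ⊆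
        (fun pq : (X × Y) × (X × Y) => |dist pq.1.1 pq.2.1 - dist pq.1.2 pq.2.2|) ''
          (S ×ˢ S) := by
      rintro v ⟨p, hp, q, hq, rfl⟩
      exact ⟨(p, q), ⟨hp, hq⟩, rfl⟩
    exact Set.Finite.subset ((hSfin.prod hSfin).image _) this
  have h2 : dist a b ≤ relDis S := by
    apply le_csSup hfin.bddAbove
    refine ⟨(a, f a), hf a, (b, f b), hf b, ?_⟩
    simp only [hab]
    rw [dist_self, sub_zero, abs_of_nonneg dist_nonneg]
  linarith
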